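/- Let P be an r×r matrix of trigonometric polynomials on ℝ^d, and suppose (w_α)_{α∈ℤ₊^d} is a family of vectors in ℂ^r satisfying the triangular system 2^{|α|} w_α = Σ_{0≤β≤α} (D^{α−β}P)(0) w_β for all α, where D^γ denotes the derivative normalized by 1/γ!. Let N₀ ∈ ℕ satisfy 2^{−N₀}‖P(0)‖ < 1 and (3/4)^{N₀} (1 − 2^{−N₀}‖P(0)‖)^{−1} ≤ 1, and suppose A > 0 satisfies ‖(D^α P)(0)‖ ≤ (A/2)^{|α|}/α! for all α and ‖w_α‖ ≤ A^{|α|}/α! for all |α| ≤ N₀. Then ‖w_α‖ ≤ A^{|α|}/α! for all α ∈ ℤ₊^d. -/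

import Mathlib

open Matrix
open scoped Nat

private lemma onedim_binom (x y : ℝ) (m : ℕ) :
    ∑ b ∈ Finset.Iic m, x ^ b * y ^ (m - b) / (((b)! : ℝ) * (m - b)!) = (x + y) ^ m / m ! := by
  have : Finset.Iic m = Finset.range (m+1) := by ext k; simp [Nat.lt_succ_iff]
  rw [this, add_pow, Finset.sum_div]
  refine Finset.sum_congr rfl fun b hb => ?_
  rw [Finset.mem_range, Nat.lt_succ_iff] at hb
  rw [Nat.cast_choose ℝ hb]
  have h1 : ((b)! : ℝ) ≠ 0 := Nat.cast_ne_zero.2 (Nat.factorial_ne_zero _)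
  have h2 : (((m - b))! : ℝ) ≠ 0 := Nat.cast_ne_zero.2 (Nat.factorial_ne_zero _)
  have h3 : ((m)! : ℝ) ≠ 0 := Nat.cast_ne_zero.2 (Nat.factorial_ne_zero _)
  field_simp

private lemma fs_sum' {d : ℕ} (f : Fin d →₀ ℕ) : (f.sum fun _ n => n) = ∑ i, f i :=
  Finsupp.sum_fintype _ _ (fun _ => rfl)

private lemma fs_prod' {d : ℕ} (f : Fin d →₀ ℕ) :
    (f.prod fun _ n => ((n ! : ℝ))) = ∏ i, ((f i)! : ℝ) :=
  Finsupp.prod_fintype _ _ (fun _ => by simp)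

private lemma key_identity (d : ℕ) (α : Fin d →₀ ℕ) (x y : ℝ) :
    ∑ β ∈ Finset.Iic α, x ^ (β.sum fun _ n => n) * y ^ ((α - β).sum fun _ n => n)
        / ((β.prod fun _ n => ((n ! : ℝ))) * ((α - β).prod fun _ n => ((n ! : ℝ))))
    = (x + y) ^ (α.sum fun _ n => n) / (α.prod fun _ n => ((n ! : ℝ))) := by
  have step1 : ∀ β : Fin d →₀ ℕ,
      x ^ (β.sum fun _ n => n) * y ^ ((α - β).sum fun _ n => n)
        / ((β.prod fun _ n => ((n ! : ℝ))) * ((α - β).prod fun _ n => ((n ! : ℝ))))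
      = ∏ i, (x ^ (β i) * y ^ (α i - β i) / (((β i)! : ℝ) * ((α i - β i)!))) := by
    intro β
    rw [fs_sum', fs_sum', fs_prod', fs_prod']
    rw [← Finset.prod_pow_eq_pow_sum, ← Finset.prod_pow_eq_pow_sum, ← Finset.prod_mul_distrib,
      ← Finset.prod_mul_distrib, ← Finset.prod_div_distrib]
    refine Finset.prod_congr rfl fun i _ => ?_
    rw [Finsupp.tsub_apply]
  simp only [step1]
  have step2 : ∑ β ∈ Finset.Iic α,
      ∏ i, (x ^ (β i) * y ^ (α i - β i) / (((β i)! : ℝ) * ((α i - β i)!)))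
      = ∑ f ∈ Fintype.piFinset (fun i => Finset.Iic (α i)),
        ∏ i, (x ^ (f i) * y ^ (α i - f i) / (((f i)! : ℝ) * ((α i - f i)!))) := by
    refine Finset.sum_nbij' (fun β => ⇑β) (fun f => Finsupp.equivFunOnFinite.symm f) ?_ ?_ ?_ ?_ ?_
    · intro β hβ
      rw [Finset.mem_Iic] at hβ
      simp only [Fintype.mem_piFinset, Finset.mem_Iic]
      exact fun i => hβ i
    · intro f hf
      rw [Fintype.mem_piFinset] at hf
      rw [Finset.mem_Iic, Finsupp.le_def]
      intro i
      simpa using Finset.mem_Iic.mp (hf i)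
    · intro β _; exact Finsupp.equivFunOnFinite.symm_apply_apply β
    · intro f _; rfl
    · intro β _; rfl
  have step3 := Finset.prod_univ_sum (fun i : Fin d => Finset.Iic (α i))
    (fun (i : Fin d) (b : ℕ) => x ^ b * y ^ (α i - b) / (((b)! : ℝ) * ((α i - b)!)))
  rw [step2, ← step3]
  rw [fs_sum', fs_prod', ← Finset.prod_pow_eq_pow_sum, ← Finset.prod_div_distrib]
  exact Finset.prod_congr rfl fun i _ => onedim_binom x y (α i)

private lemma sum_lt_of_lt {d : ℕ} {β α : Fin d →₀ ℕ} (h : β < α) :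
    (β.sum fun _ n => n) < (α.sum fun _ n => n) := by
  rw [fs_sum', fs_sum']
  obtain ⟨hle, hne⟩ := lt_iff_le_and_ne.mp h
  obtain ⟨i, hi⟩ : ∃ i, β i ≠ α i := by
    by_contra hc
    push_neg at hc
    exact hne (Finsupp.ext hc)
  exact Finset.sum_lt_sum (fun j _ => hle j) ⟨i, Finset.mem_univ i, lt_of_le_of_ne (hle i) hi⟩

private lemma growth_bound {C0 : ℝ} (hC0 : 0 ≤ C0) {N0 n : ℕ} (hn : N0 ≤ n)
    (hN1 : (2⁻¹ : ℝ) ^ N0 * C0 < 1)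
    (hN2 : (3 / 4 : ℝ) ^ N0 * (1 - 2⁻¹ ^ N0 * C0)⁻¹ ≤ 1) :
    (3 / 2 : ℝ) ^ n ≤ 2 ^ n - C0 := by
  have pos : (0 : ℝ) < 1 - 2⁻¹ ^ N0 * C0 := by linarith
  rw [← div_eq_mul_inv] at hN2
  have h4 : (3 / 4 : ℝ) ^ N0 ≤ 1 - 2⁻¹ ^ N0 * C0 := (div_le_one pos).mp hN2
  have h5 : (3 / 2 : ℝ) ^ N0 ≤ 2 ^ N0 - C0 := by
    have := mul_le_mul_of_nonneg_right h4 (le_of_lt (pow_pos (by norm_num : (0:ℝ) < 2) N0))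
    calc (3/2 : ℝ) ^ N0 = (3/4 : ℝ) ^ N0 * 2 ^ N0 := by
          rw [← mul_pow]; norm_num
      _ ≤ (1 - 2⁻¹ ^ N0 * C0) * 2 ^ N0 := this
      _ = 2 ^ N0 - (2⁻¹ * 2 : ℝ) ^ N0 * C0 := by rw [mul_pow]; ring
      _ = 2 ^ N0 - C0 := by norm_num
  obtain ⟨k, rfl⟩ := Nat.exists_eq_add_of_le hn
  have h6 : (3 / 2 : ℝ) ^ k ≤ 2 ^ k := pow_le_pow_left₀ (by norm_num) (by norm_num) k
  have h7 : (1 : ℝ) ≤ 2 ^ k := one_le_pow₀ (by norm_num : (1:ℝ) ≤ 2)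
  have h8 : (0 : ℝ) < (3/2 : ℝ) ^ N0 := pow_pos (by norm_num) N0
  calc (3/2 : ℝ) ^ (N0 + k) = (3/2 : ℝ) ^ N0 * (3/2) ^ k := pow_add _ _ _
    _ ≤ (2 ^ N0 - C0) * 2 ^ k :=
        mul_le_mul h5 h6 (le_of_lt (pow_pos (by norm_num) k)) (by linarith)
    _ = 2 ^ (N0 + k) - C0 * 2 ^ k := by rw [pow_add]; ring
    _ ≤ 2 ^ (N0 + k) - C0 := by nlinarith

/-- inductive bound `‖w_α‖ ≤ A^{|α|}/α!` for solutions of the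
triangular system `2^{|α|} w_α = Σ_{β ≤ α} (D^{α-β}P)(0) w_β`. Here `Pc α`
denotes the normalized derivative `(D^α P)(0)` of the trigonometric polynomial
mask `P`, and the matrix norm is the one subordinate to the vector norm. -/
theorem triangular_system_bound (d r : ℕ) (A C0 : ℝ) (N0 : ℕ)
    (Pc : (Fin d →₀ ℕ) → Matrix (Fin r) (Fin r) ℂ)
    (w : (Fin d →₀ ℕ) → (Fin r → ℂ))
    (hA : 0 < A)
    (hPc : ∀ (α : Fin d →₀ ℕ) (x : Fin r → ℂ),
      ‖(Pc α) *ᵥ x‖ ≤ ((A / 2) ^ (α.sum fun _ n => n) / ((α.prod fun _ n => n !) : ℝ)) * ‖x‖)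
    (hC0 : ∀ x : Fin r → ℂ, ‖(Pc 0) *ᵥ x‖ ≤ C0 * ‖x‖)
    (hN1 : 2⁻¹ ^ N0 * C0 < 1)
    (hN2 : (3 / 4 : ℝ) ^ N0 * (1 - 2⁻¹ ^ N0 * C0)⁻¹ ≤ 1)
    (hrec : ∀ α : Fin d →₀ ℕ,
      ((2 : ℂ) ^ (α.sum fun _ n => n)) • w α = ∑ β ∈ Finset.Iic α, (Pc (α - β)) *ᵥ w β)
    (hbase : ∀ α : Fin d →₀ ℕ, (α.sum fun _ n => n) ≤ N0 →
      ‖w α‖ ≤ A ^ (α.sum fun _ n => n) / ((α.prod fun _ n => n !) : ℝ)) :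
    ∀ α : Fin d →₀ ℕ, ‖w α‖ ≤ A ^ (α.sum fun _ n => n) / ((α.prod fun _ n => n !) : ℝ) := by
  suffices H : ∀ n : ℕ, ∀ α : Fin d →₀ ℕ, (α.sum fun _ n => n) ≤ n →
      ‖w α‖ ≤ A ^ (α.sum fun _ n => n) / ((α.prod fun _ n => n !) : ℝ) by
    intro α; exact H _ α le_rfl
  intro n
  induction n with
  | zero => intro α hα; exact hbase α (le_trans hα (Nat.zero_le _))
  | succ n IH =>
    intro α hα
    by_cases hsmall : (α.sum fun _ n => n) ≤ N0
    · exact hbase α hsmall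
    push_neg at hsmall
    set m : ℕ := α.sum fun _ n => n with hm
    -- positivity of the target RHS
    have hfac : (0 : ℝ) < (α.prod fun _ n => ((n ! : ℝ))) := by
      rw [fs_prod']
      exact Finset.prod_pos fun i _ => by positivity
    have hT : (0 : ℝ) < A ^ m / (α.prod fun _ n => ((n ! : ℝ))) :=
      div_pos (pow_pos hA m) hfac
    rcases eq_or_lt_of_le (norm_nonneg (w α)) with hw0 | hwpos
    · rw [← hw0]; exact hT.le
    -- C0 is nonnegative
    have hC0nn : (0 : ℝ) ≤ C0 := by
      have h1 := hC0 (w α)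
      have h2 : (0 : ℝ) ≤ C0 * ‖w α‖ := le_trans (norm_nonneg _) h1
      exact nonneg_of_mul_nonneg_right (by linarith [h2] : (0:ℝ) ≤ ‖w α‖ * C0) hwpos
    -- basic rewriting of the recursion
    have hnorm : (2 : ℝ) ^ m * ‖w α‖ = ‖∑ β ∈ Finset.Iic α, (Pc (α - β)) *ᵥ w β‖ := by
      rw [← hrec α, norm_smul]
      norm_num
      exact Or.inl hm
    -- split off the β = α term
    have hsplit : ∑ β ∈ Finset.Iic α, ‖(Pc (α - β)) *ᵥ w β‖
        = ‖(Pc 0) *ᵥ w α‖ + ∑ β ∈ Finset.Iio α, ‖(Pc (α - β)) *ᵥ w β‖ := by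
      rw [← Finset.Iio_insert, Finset.sum_insert (by simp), tsub_self]
    -- bound the lower-order terms
    have hterm : ∀ β ∈ Finset.Iio α, ‖(Pc (α - β)) *ᵥ w β‖
        ≤ A ^ (β.sum fun _ n => n) * (A / 2) ^ ((α - β).sum fun _ n => n)
          / ((β.prod fun _ n => ((n ! : ℝ))) * ((α - β).prod fun _ n => ((n ! : ℝ)))) := by
      intro β hβ
      rw [Finset.mem_Iio] at hβ
      have hlt : (β.sum fun _ n => n) < m := sum_lt_of_lt hβ
      have hIH := IH β (by omega)
      have h1 := hPc (α - β) (w β)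
      have hc1 : (0 : ℝ) ≤ (A / 2) ^ ((α - β).sum fun _ n => n)
          / ((α - β).prod fun _ n => ((n ! : ℝ))) := by
        have : (0 : ℝ) < ((α - β).prod fun _ n => ((n ! : ℝ))) := by
          rw [fs_prod']; exact Finset.prod_pos fun i _ => by positivity
        positivity
      calc ‖(Pc (α - β)) *ᵥ w β‖
          ≤ ((A / 2) ^ ((α - β).sum fun _ n => n) / ((α - β).prod fun _ n => ((n ! : ℝ))))
            * ‖w β‖ := h1
        _ ≤ ((A / 2) ^ ((α - β).sum fun _ n => n) / ((α - β).prod fun _ n => ((n ! : ℝ))))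
            * (A ^ (β.sum fun _ n => n) / (β.prod fun _ n => ((n ! : ℝ)))) :=
            mul_le_mul_of_nonneg_left hIH hc1
        _ = A ^ (β.sum fun _ n => n) * (A / 2) ^ ((α - β).sum fun _ n => n)
            / ((β.prod fun _ n => ((n ! : ℝ))) * ((α - β).prod fun _ n => ((n ! : ℝ)))) := by
            ring
    -- the key combinatorial identity
    have hid := key_identity d α A (A / 2)
    -- value of the β = α term in the identity
    have hαterm : A ^ (α.sum fun _ n => n) * (A / 2) ^ ((α - α).sum fun _ n => n)
        / ((α.prod fun _ n => ((n ! : ℝ))) * ((α - α).prod fun _ n => ((n ! : ℝ))))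
        = A ^ m / (α.prod fun _ n => ((n ! : ℝ))) := by
      rw [tsub_self]
      simp [Finsupp.sum_zero_index, Finsupp.prod_zero_index]
      rw [← hm]
    have hsum_le : ∑ β ∈ Finset.Iio α, ‖(Pc (α - β)) *ᵥ w β‖
        ≤ (A + A / 2) ^ m / (α.prod fun _ n => ((n ! : ℝ)))
          - A ^ m / (α.prod fun _ n => ((n ! : ℝ))) := by
      have h2 : ∑ β ∈ Finset.Iio α, ‖(Pc (α - β)) *ᵥ w β‖
          ≤ ∑ β ∈ Finset.Iio α,
            (A ^ (β.sum fun _ n => n) * (A / 2) ^ ((α - β).sum fun _ n => n)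
            / ((β.prod fun _ n => ((n ! : ℝ))) * ((α - β).prod fun _ n => ((n ! : ℝ))))) :=
        Finset.sum_le_sum hterm
      have h3 : ∑ β ∈ Finset.Iic α,
            (A ^ (β.sum fun _ n => n) * (A / 2) ^ ((α - β).sum fun _ n => n)
            / ((β.prod fun _ n => ((n ! : ℝ))) * ((α - β).prod fun _ n => ((n ! : ℝ)))))
          = (A ^ m / (α.prod fun _ n => ((n ! : ℝ))))
            + ∑ β ∈ Finset.Iio α,
            (A ^ (β.sum fun _ n => n) * (A / 2) ^ ((α - β).sum fun _ n => n)
            / ((β.prod fun _ n => ((n ! : ℝ))) * ((α - β).prod fun _ n => ((n ! : ℝ))))) := by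
        rw [← Finset.Iio_insert, Finset.sum_insert (by simp), hαterm]
      rw [hid] at h3
      linarith
    -- assemble: (2^m - C0) * ‖w α‖ ≤ ((3/2)^m - 1) * T
    set T : ℝ := A ^ m / (α.prod fun _ n => ((n ! : ℝ))) with hTdef
    have hmain : (2 : ℝ) ^ m * ‖w α‖ ≤ C0 * ‖w α‖ + ((3 / 2) ^ m * T - T) := by
      have h5 : ‖∑ β ∈ Finset.Iic α, (Pc (α - β)) *ᵥ w β‖
          ≤ ∑ β ∈ Finset.Iic α, ‖(Pc (α - β)) *ᵥ w β‖ := norm_sum_le _ _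
      have h6 : (A + A / 2) ^ m = (3 / 2) ^ m * A ^ m := by
        rw [← mul_pow]; ring_nf
      have h7 : (A + A / 2) ^ m / (α.prod fun _ n => ((n ! : ℝ))) = (3 / 2) ^ m * T := by
        rw [h6, hTdef]; ring
      have h8 := hC0 (w α)
      rw [hnorm]
      calc ‖∑ β ∈ Finset.Iic α, (Pc (α - β)) *ᵥ w β‖
          ≤ ∑ β ∈ Finset.Iic α, ‖(Pc (α - β)) *ᵥ w β‖ := h5
        _ = ‖(Pc 0) *ᵥ w α‖ + ∑ β ∈ Finset.Iio α, ‖(Pc (α - β)) *ᵥ w β‖ := hsplit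
        _ ≤ C0 * ‖w α‖ + ((3 / 2) ^ m * T - T) := by
            have := hsum_le
            rw [h7] at this
            exact add_le_add h8 this
    have hG : (3 / 2 : ℝ) ^ m ≤ 2 ^ m - C0 :=
      growth_bound hC0nn (le_of_lt hsmall) hN1 hN2
    have hpos2 : (0 : ℝ) < 2 ^ m - C0 :=
      lt_of_lt_of_le (pow_pos (by norm_num) m) hG
    have hfinal : (2 ^ m - C0) * ‖w α‖ ≤ (2 ^ m - C0) * T := by nlinarith
    have := le_of_mul_le_mul_left hfinal hpos2
    exact this
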